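/- Let X ⊆ ℝⁿ be conically closed, i.e., for all e, f ∈ X and all reals α, β ≥ 0 we have αe + βf ∈ X. Let γ_p : ℝⁿ → ℝ be a scoring function and suppose the strict epistemic pooling principle holds for summation pooling for all e, f ∈ X, i.e., for all e, f ∈ X, γ_p(e + f) > 0 ↔ (γ_p(e) > 0 ∨ γ_p(f) > 0). Then for every e ∈ X with γ_p(e) > 0 and every real λ > 0, it holds that γ_p(λe) > 0. -/
import Mathlib


/-- On a conically closed set X, under the strict epistemic pooling
principle for summation pooling, scoring is invariant under positive scaling:
if γ_p(e) > 0 then γ_p(λ • e) > 0 for every λ > 0. -/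
theorem sum_pooling_scaling_invariant (n : ℕ) (X : Set (Fin n → ℝ))
    (hX : ∀ e ∈ X, ∀ f ∈ X, ∀ α β : ℝ, 0 ≤ α → 0 ≤ β → α • e + β • f ∈ X)
    (γ : (Fin n → ℝ) → ℝ)
    (hpool : ∀ e ∈ X, ∀ f ∈ X, γ (e + f) > 0 ↔ (γ e > 0 ∨ γ f > 0)) :
    ∀ e ∈ X, γ e > 0 → ∀ l : ℝ, 0 < l → γ (l • e) > 0 := by
  intro e heX hγe l hl
  -- membership of nonnegative scalings
  have hmem : ∀ α : ℝ, 0 ≤ α → α • e ∈ X := by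
    intro α hα
    have := hX e heX e heX α 0 hα le_rfl
    simpa using this
  -- step 1: for μ ≥ 1, γ (μ • e) > 0
  have hbig : ∀ μ : ℝ, 1 ≤ μ → γ (μ • e) > 0 := by
    intro μ hμ
    have h1 : (μ - 1) • e ∈ X := hmem _ (by linarith)
    have h2 : (μ - 1) • e + e = μ • e := by
      rw [sub_smul, one_smul]; abel
    have := (hpool _ h1 _ heX).mpr (Or.inr hγe)
    rwa [h2] at this
  -- step 2: doubling preserves positivity downward
  have hhalf : ∀ c : ℝ, 0 ≤ c → γ ((2 * c) • e) > 0 → γ (c • e) > 0 := by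
    intro c hc h
    have hm := hmem c hc
    have h2 : c • e + c • e = (2 * c) • e := by
      rw [two_mul, add_smul]
    have := (hpool _ hm _ hm).mp (by rwa [h2])
    tauto
  -- step 3: climb via powers of 2
  have hpow : ∀ k : ℕ, γ ((2 ^ k * l) • e) > 0 → γ (l • e) > 0 := by
    intro k
    induction k with
    | zero => simpa using id
    | succ k ih =>
      intro h
      apply ih
      apply hhalf _ (by positivity)
      have : (2 : ℝ) ^ (k + 1) * l = 2 * (2 ^ k * l) := by ring
      rwa [this] at h
  obtain ⟨k, hk⟩ := pow_unbounded_of_one_lt (1 / l) (one_lt_two (α := ℝ))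
  apply hpow k
  apply hbig
  rw [div_lt_iff₀ hl] at hk
  nlinarith
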